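/- Let H = {w ∈ ℂ : Re w < 0} be the left half-plane and let g : H → ℂ be holomorphic with g'(w) ≠ 0 and |g(w)| ≠ 1 for every w ∈ H. Suppose there exists T ∈ SU(1,1) such that (T₂₁·g(w) + T₂₂)·g(w+2πi) = T₁₁·g(w) + T₁₂ for all w ∈ H. Then T is not hyperbolic: there exist no P ∈ SU(1,1), ε ∈ {1,−1} and t > 0 with P⁻¹TP = ε·Λ_h(t). (This is the paper's Corollary: the monodromy of a conformal hyperbolic metric on the punctured disk is either elliptic or parabolic; hyperbolic monodromy never occurs.) -/

import Mathlib

open Complex Matrix Metric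

noncomputable section

/-- The matrix `e₃ = diag(1,-1)`. -/
def e3 : Matrix (Fin 2) (Fin 2) ℂ := !![1, 0; 0, -1]

/-- `SU(1,1)`: matrices of determinant 1 with `S e₃ S* = e₃`. -/
def SU11 (S : Matrix (Fin 2) (Fin 2) ℂ) : Prop :=
  S.det = 1 ∧ S * e3 * Sᴴ = e3

/-- `Λ_h(t) = [[cosh t, sinh t],[sinh t, cosh t]]`. -/
def Λh (t : ℝ) : Matrix (Fin 2) (Fin 2) ℂ :=
  !![(Real.cosh t : ℂ), (Real.sinh t : ℂ); (Real.sinh t : ℂ), (Real.cosh t : ℂ)]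

/- ### Auxiliary material -/

section Aux

open Set

lemma e3_mul_e3 : e3 * e3 = 1 := by
  ext i j
  fin_cases i <;> fin_cases j <;>
    simp [e3, Matrix.mul_apply, Fin.sum_univ_two, Matrix.one_apply]

lemma e3_conjTranspose : e3ᴴ = e3 := by
  ext i j
  fin_cases i <;> fin_cases j <;> simp [e3, Matrix.conjTranspose_apply]

/-- column relation: `Sᴴ e₃ S = e₃`. -/
lemma SU11.col {S : Matrix (Fin 2) (Fin 2) ℂ} (hS : SU11 S) : Sᴴ * e3 * S = e3 := by
  have hinv : S * (e3 * Sᴴ * e3) = 1 := by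
    calc S * (e3 * Sᴴ * e3) = (S * e3 * Sᴴ) * e3 := by noncomm_ring
    _ = e3 * e3 := by rw [hS.2]
    _ = 1 := e3_mul_e3
  have hinv' : (e3 * Sᴴ * e3) * S = 1 := mul_eq_one_comm.1 hinv
  calc Sᴴ * e3 * S = e3 * ((e3 * Sᴴ * e3) * S) := by
        rw [← Matrix.mul_assoc, ← Matrix.mul_assoc, ← Matrix.mul_assoc, e3_mul_e3]
        simp [Matrix.one_mul]
  _ = e3 := by rw [hinv']; try simp

lemma SU11.inv {S : Matrix (Fin 2) (Fin 2) ℂ} (hS : SU11 S) : SU11 S⁻¹ := by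
  have hdet : S.det ≠ 0 := by rw [hS.1]; norm_num
  have hinv : S * (e3 * Sᴴ * e3) = 1 := by
    calc S * (e3 * Sᴴ * e3) = (S * e3 * Sᴴ) * e3 := by noncomm_ring
    _ = e3 * e3 := by rw [hS.2]
    _ = 1 := e3_mul_e3
  have hSinv : S⁻¹ = e3 * Sᴴ * e3 := Matrix.inv_eq_right_inv hinv
  constructor
  · rw [Matrix.det_nonsing_inv, hS.1]
    simp
  · rw [hSinv]
    have : (e3 * Sᴴ * e3) * e3 * (e3 * Sᴴ * e3)ᴴ = e3 * Sᴴ * e3 * e3 * (e3ᴴ * Sᴴᴴ * e3ᴴ) := by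
      simp [Matrix.conjTranspose_mul, Matrix.mul_assoc]
    rw [this, e3_conjTranspose, Matrix.conjTranspose_conjTranspose]
    calc e3 * Sᴴ * e3 * e3 * (e3 * S * e3)
        = e3 * (Sᴴ * ((e3 * e3) * e3) * S) * e3 := by noncomm_ring
    _ = e3 * (Sᴴ * (1 * e3) * S) * e3 := by rw [e3_mul_e3]
    _ = e3 * (Sᴴ * e3 * S) * e3 := by rw [Matrix.one_mul]
    _ = e3 * e3 * e3 := by rw [hS.col]
    _ = 1 * e3 := by rw [e3_mul_e3]
    _ = e3 := Matrix.one_mul e3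

/-- entrywise consequences of `Sᴴ e₃ S = e₃`. -/
lemma SU11.entry00 {S : Matrix (Fin 2) (Fin 2) ℂ} (hS : SU11 S) :
    Complex.normSq (S 0 0) - Complex.normSq (S 1 0) = 1 := by
  have h := hS.col
  have h00 : (Sᴴ * e3 * S) 0 0 = e3 0 0 := by rw [h]
  simp [Matrix.mul_apply, Fin.sum_univ_two, e3, Matrix.conjTranspose_apply] at h00
  have h2 := congrArg Complex.re h00
  simp only [Complex.add_re, Complex.neg_re, Complex.mul_re, Complex.conj_re, Complex.conj_im,
    Complex.one_re] at h2
  simp only [Complex.normSq_apply]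
  linarith

lemma SU11.entry11 {S : Matrix (Fin 2) (Fin 2) ℂ} (hS : SU11 S) :
    Complex.normSq (S 0 1) - Complex.normSq (S 1 1) = -1 := by
  have h := hS.col
  have h11 : (Sᴴ * e3 * S) 1 1 = e3 1 1 := by rw [h]
  simp [Matrix.mul_apply, Fin.sum_univ_two, e3, Matrix.conjTranspose_apply] at h11
  have h2 := congrArg Complex.re h11
  simp only [Complex.add_re, Complex.neg_re, Complex.mul_re, Complex.conj_re, Complex.conj_im,
    Complex.one_re] at h2
  simp only [Complex.normSq_apply]
  linarith

lemma SU11.entry01 {S : Matrix (Fin 2) (Fin 2) ℂ} (hS : SU11 S) :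
    (starRingEnd ℂ) (S 0 0) * (S 0 1) - (starRingEnd ℂ) (S 1 0) * (S 1 1) = 0 := by
  have h := hS.col
  have h01 : (Sᴴ * e3 * S) 0 1 = e3 0 1 := by rw [h]
  simp [Matrix.mul_apply, Fin.sum_univ_two, e3, Matrix.conjTranspose_apply] at h01
  linear_combination h01

/-- fundamental identity: for `S ∈ SU(1,1)`,
`|S₀₀ z + S₀₁|² - |S₁₀ z + S₁₁|² = |z|² - 1`. -/
lemma SU11.normSq_identity {S : Matrix (Fin 2) (Fin 2) ℂ} (hS : SU11 S) (z : ℂ) :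
    Complex.normSq (S 0 0 * z + S 0 1) - Complex.normSq (S 1 0 * z + S 1 1)
      = Complex.normSq z - 1 := by
  have h00 := hS.entry00
  have h11 := hS.entry11
  have h01 := hS.entry01
  have hre := congrArg Complex.re h01
  have him := congrArg Complex.im h01
  simp only [Complex.sub_re, Complex.sub_im, Complex.mul_re, Complex.mul_im,
    Complex.conj_re, Complex.conj_im, Complex.zero_re, Complex.zero_im] at hre him
  simp only [Complex.normSq_apply, Complex.add_re, Complex.add_im, Complex.mul_re,
    Complex.mul_im] at h00 h11 ⊢
  linear_combination (z.re*z.re + z.im*z.im) * h00 + h11 + (2*z.re) * hre + (2*z.im) * him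

lemma SU11.denom_ne {S : Matrix (Fin 2) (Fin 2) ℂ} (hS : SU11 S) {z : ℂ} (hz : ‖z‖ < 1) :
    S 1 0 * z + S 1 1 ≠ 0 := by
  intro h0
  have hid := hS.normSq_identity z
  rw [h0] at hid
  simp only [map_zero] at hid
  have h1 : Complex.normSq z < 1 := by
    have h2 : ‖z‖^2 < 1 := by nlinarith [norm_nonneg z]
    simpa [Complex.sq_norm] using h2
  have h3 : Complex.normSq (S 0 0 * z + S 0 1) ≥ 0 := Complex.normSq_nonneg _
  linarith

lemma SU11.mobius_lt {S : Matrix (Fin 2) (Fin 2) ℂ} (hS : SU11 S) {z : ℂ} (hz : ‖z‖ < 1) :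
    ‖(S 0 0 * z + S 0 1) / (S 1 0 * z + S 1 1)‖ < 1 := by
  have hden := hS.denom_ne hz
  have hid := hS.normSq_identity z
  have h1 : Complex.normSq z < 1 := by
    have h2 : ‖z‖^2 < 1 := by nlinarith [norm_nonneg z]
    simpa [Complex.sq_norm] using h2
  have hnum_lt : Complex.normSq (S 0 0 * z + S 0 1) < Complex.normSq (S 1 0 * z + S 1 1) := by
    linarith
  have hdpos : 0 < Complex.normSq (S 1 0 * z + S 1 1) := Complex.normSq_pos.2 hden
  rw [norm_div, div_lt_one (norm_pos_iff.mpr hden)]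
  nlinarith [norm_nonneg (S 0 0 * z + S 0 1), norm_nonneg (S 1 0 * z + S 1 1),
    hnum_lt, Complex.normSq_eq_norm_sq (S 0 0 * z + S 0 1),
    Complex.normSq_eq_norm_sq (S 1 0 * z + S 1 1)]

/-- Core analytic lemma: there is no holomorphic map of the left half-plane into the
horizontal strip `|Im| < π/2` which is shifted by `2t > 0` under `w ↦ w + 2πi`. -/
lemma no_strip_map (F : ℂ → ℂ) (t : ℝ) (ht : 0 < t)
    (hd : ∀ w : ℂ, w.re < 0 → DifferentiableAt ℂ F w)
    (him : ∀ w : ℂ, w.re < 0 → |(F w).im| < Real.pi / 2)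
    (hmono : ∀ w : ℂ, w.re < 0 → F (w + 2 * Real.pi * Complex.I) = F w + 2 * t) :
    False := by
  set x : ℝ := -(2 * Real.pi * Real.exp Real.pi / t + 1) with hxdef
  have hx0 : x < 0 := by
    have : 0 < 2 * Real.pi * Real.exp Real.pi / t := by positivity
    rw [hxdef]; linarith
  have hxpos : (0:ℝ) < -x := by linarith
  set s : Set ℂ := Complex.re ⁻¹' {x} with hsdef
  have hsconv : Convex ℝ s := (convex_singleton x).linear_preimage Complex.reLm
  have hs_sub : ∀ w ∈ s, w.re < 0 := by
    intro w hw
    have hwx : w.re = x := hw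
    rw [hwx]; exact hx0
  set q : ℂ → ℂ := fun w => Complex.exp (Complex.I * F w) with hq
  have hqnormeq : ∀ w : ℂ, ‖q w‖ = Real.exp (-(F w).im) := by
    intro w
    rw [hq]; simp [Complex.norm_exp]
  have hqnorm : ∀ w : ℂ, w.re < 0 → ‖q w‖ < Real.exp (Real.pi / 2) := by
    intro w hw
    rw [hqnormeq]
    exact Real.exp_lt_exp.2 (by have := (abs_lt.1 (him w hw)).1; linarith)
  have hqnorm' : ∀ w : ℂ, w.re < 0 → Real.exp (-(Real.pi / 2)) ≤ ‖q w‖ := by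
    intro w hw
    rw [hqnormeq]
    exact Real.exp_le_exp.2 (by have := (abs_lt.1 (him w hw)).2; linarith)
  have hqd : ∀ w : ℂ, w.re < 0 → HasDerivAt q (q w * (Complex.I * deriv F w)) w := by
    intro w hw
    have h1 : HasDerivAt (fun z => Complex.I * F z) (Complex.I * deriv F w) w :=
      ((hd w hw).hasDerivAt).const_mul Complex.I
    simpa [hq] using h1.cexp
  have key : ∀ w ∈ s, ‖deriv F w‖ ≤ 2 * Real.exp Real.pi / (-x) := by
    intro w hw
    have hwre : w.re = x := hw
    have hwneg : w.re < 0 := hs_sub w hw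
    have hball : Metric.ball w (-x) ⊆ {z : ℂ | z.re < 0} := by
      intro z hz
      have h1 : ‖z - w‖ < -x := by simpa [dist_eq_norm] using hz
      have h2 : |z.re - w.re| < -x := lt_of_le_of_lt (by
        simpa using Complex.abs_re_le_norm (z - w)) h1
      have h3 := (abs_lt.1 h2).2
      simp only [Set.mem_setOf_eq]
      linarith [hwre.le, hwre.ge]
    have hdball : DifferentiableOn ℂ q (Metric.ball w (-x)) := fun z hz =>
      ((hqd z (hball hz)).differentiableAt).differentiableWithinAt
    have hmaps : Set.MapsTo q (Metric.ball w (-x))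
        (Metric.ball (q w) (2 * Real.exp (Real.pi / 2))) := by
      intro z hz
      have h1 := hqnorm z (hball hz)
      have h2 := hqnorm w hwneg
      have : dist (q z) (q w) < 2 * Real.exp (Real.pi / 2) := by
        calc dist (q z) (q w) ≤ ‖q z‖ + ‖q w‖ := dist_le_norm_add_norm _ _
          _ < 2 * Real.exp (Real.pi / 2) := by linarith
      exact this
    have hder := Complex.norm_deriv_le_div_of_mapsTo_ball hdball (hmaps.mono_right Metric.ball_subset_closedBall) hxpos
    have hderiv_q : deriv q w = q w * (Complex.I * deriv F w) := (hqd w hwneg).deriv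
    rw [hderiv_q] at hder
    have hnorm : ‖q w * (Complex.I * deriv F w)‖ = ‖q w‖ * ‖deriv F w‖ := by
      simp [norm_mul]
    rw [hnorm] at hder
    have hlow := hqnorm' w hwneg
    have hpos : (0:ℝ) < Real.exp (-(Real.pi/2)) := Real.exp_pos _
    have h1 : ‖deriv F w‖ ≤ (2 * Real.exp (Real.pi / 2) / (-x)) / Real.exp (-(Real.pi/2)) := by
      rw [le_div_iff₀ hpos]
      calc ‖deriv F w‖ * Real.exp (-(Real.pi/2)) ≤ ‖deriv F w‖ * ‖q w‖ :=
            mul_le_mul_of_nonneg_left hlow (norm_nonneg _)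
        _ = ‖q w‖ * ‖deriv F w‖ := mul_comm _ _
        _ ≤ 2 * Real.exp (Real.pi / 2) / (-x) := hder
    have heq : (2 * Real.exp (Real.pi / 2) / (-x)) / Real.exp (-(Real.pi/2))
        = 2 * Real.exp Real.pi / (-x) := by
      rw [Real.exp_neg, div_inv_eq_mul, div_mul_eq_mul_div]
      rw [mul_assoc, ← Real.exp_add]
      norm_num
    rw [heq] at h1
    exact h1
  have hFd : ∀ w ∈ s, HasDerivWithinAt F (deriv F w) s w := fun w hw =>
    ((hd w (hs_sub w hw)).hasDerivAt).hasDerivWithinAt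
  have hxs : (x : ℂ) ∈ s := by simp [hsdef]
  have hys : (x : ℂ) + 2 * Real.pi * Complex.I ∈ s := by
    simp [hsdef, Complex.add_re, Complex.mul_re]
  have hbound := hsconv.norm_image_sub_le_of_norm_hasDerivWithin_le hFd key hxs hys
  have hdiff : F ((x:ℂ) + 2 * Real.pi * Complex.I) - F (x:ℂ) = 2 * t := by
    rw [hmono (x:ℂ) (by simpa using hx0)]; ring
  rw [hdiff] at hbound
  have hnn : ‖((x:ℂ) + 2 * Real.pi * Complex.I) - (x:ℂ)‖ = 2 * Real.pi := by
    have h1 : ((x:ℂ) + 2 * Real.pi * Complex.I) - (x:ℂ) = (2 * Real.pi : ℝ) * Complex.I := by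
      push_cast; ring
    rw [h1]
    simp only [norm_mul, Complex.norm_I, Complex.norm_real, Real.norm_eq_abs,
      mul_one, _root_.abs_of_nonneg (by positivity : (0:ℝ) ≤ 2 * Real.pi), abs_two,
      _root_.abs_of_pos Real.pi_pos]
  have hnt : ‖(2 * (t:ℂ))‖ = 2 * t := by
    rw [show (2 * (t:ℂ)) = ((2*t : ℝ) : ℂ) by push_cast; ring]
    rw [Complex.norm_real, Real.norm_eq_abs, _root_.abs_of_nonneg (by linarith : (0:ℝ) ≤ 2*t)]
  rw [hnt, hnn] at hbound
  have hbound2 : 2 * t * (-x) ≤ 2 * Real.exp Real.pi * (2 * Real.pi) := by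
    rw [div_mul_eq_mul_div, ← le_div_iff₀ hxpos] at *
    exact hbound
  have hAx : (-x) * t = 2 * Real.pi * Real.exp Real.pi + t := by
    rw [hxdef]; field_simp
  nlinarith [hbound2, hAx, ht]

lemma one_sub_ne {z : ℂ} (hz : ‖z‖ < 1) : (1 : ℂ) - z ≠ 0 := by
  intro h0
  have h1 : z = 1 := by linear_combination -h0
  rw [h1] at hz
  norm_num at hz

lemma ratio_re_pos {z : ℂ} (hz : ‖z‖ < 1) : 0 < ((1 + z) / (1 - z)).re := by
  have hne := one_sub_ne hz
  rw [Complex.div_re, ← add_div]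
  have hns : 0 < Complex.normSq (1 - z) := Complex.normSq_pos.2 hne
  have hkey : (1 + z).re * (1 - z).re + (1 + z).im * (1 - z).im = 1 - Complex.normSq z := by
    simp only [Complex.normSq_apply, Complex.add_re, Complex.sub_re, Complex.add_im,
      Complex.sub_im, Complex.one_re, Complex.one_im]
    ring
  rw [hkey]
  have hlt : Complex.normSq z < 1 := by
    have h1 : ‖z‖ ^ 2 < 1 := by nlinarith [norm_nonneg z]
    simpa [Complex.sq_norm] using h1
  exact div_pos (by linarith) hns

/-- There is no holomorphic map of the left half-plane into the unit disk whose
monodromy is the hyperbolic transformation `Λ_h(t)` with `t > 0`. -/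
lemma no_disk_map (h : ℂ → ℂ) (t : ℝ) (ht : 0 < t)
    (hd : ∀ w : ℂ, w.re < 0 → DifferentiableAt ℂ h w)
    (hlt : ∀ w : ℂ, w.re < 0 → ‖h w‖ < 1)
    (hm : ∀ w : ℂ, w.re < 0 →
      ((Real.sinh t : ℂ) * h w + Real.cosh t) * h (w + 2 * Real.pi * Complex.I)
        = (Real.cosh t : ℂ) * h w + Real.sinh t) :
    False := by
  have hre : ∀ w : ℂ, w.re < 0 → 0 < ((1 + h w) / (1 - h w)).re := fun w hw =>
    ratio_re_pos (hlt w hw)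
  have hne1 : ∀ w : ℂ, w.re < 0 → (1:ℂ) - h w ≠ 0 := fun w hw => one_sub_ne (hlt w hw)
  have hrne : ∀ w : ℂ, w.re < 0 → (1 + h w) / (1 - h w) ≠ 0 := by
    intro w hw h0
    have := hre w hw
    rw [h0] at this; simp at this
  apply no_strip_map (fun w => Complex.log ((1 + h w) / (1 - h w))) t ht
  · intro w hw
    have hdr : DifferentiableAt ℂ (fun w => (1 + h w) / (1 - h w)) w :=
      DifferentiableAt.div ((differentiableAt_const _).add (hd w hw))
        ((differentiableAt_const _).sub (hd w hw)) (hne1 w hw)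
    exact (Complex.differentiableAt_log (Or.inl (hre w hw))).comp w hdr
  · intro w hw
    simp only [Complex.log_im]
    exact Complex.abs_arg_lt_pi_div_two_iff.2 (Or.inl (hre w hw))
  · intro w hw
    have hw' : (w + 2 * Real.pi * Complex.I).re < 0 := by
      simpa [Complex.add_re, Complex.mul_re] using hw
    set ch : ℂ := (Real.cosh t : ℂ) with hch
    set sh : ℂ := (Real.sinh t : ℂ) with hsh
    set E : ℂ := ((Real.exp (2*t) : ℝ) : ℂ) with hE
    set z := h w with hzdef
    set z' := h (w + 2 * Real.pi * Complex.I) with hz'def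
    have hmw : (sh * z + ch) * z' = ch * z + sh := hm w hw
    have hexp : E * (ch - sh) = ch + sh := by
      have hr : Real.exp (2*t) * (Real.cosh t - Real.sinh t) = Real.cosh t + Real.sinh t := by
        rw [Real.cosh_sub_sinh, Real.cosh_add_sinh, ← Real.exp_add]
        ring_nf
      rw [hE, hch, hsh]
      exact_mod_cast congrArg (Complex.ofReal) hr
    have hdenom : sh * z + ch ≠ 0 := by
      intro h0
      have hlt1 := hlt w hw
      have habs : |Real.sinh t| < Real.cosh t := by
        nlinarith [Real.cosh_sq_sub_sinh_sq t, abs_nonneg (Real.sinh t),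
          _root_.sq_abs (Real.sinh t), Real.cosh_pos (x := t)]
      have h1 : ‖sh * z‖ = ‖ch‖ := by
        rw [show sh * z = -ch by linear_combination h0]
        simp
      rw [norm_mul, hsh, hch] at h1
      simp only [Complex.norm_real, Real.norm_eq_abs] at h1
      rw [_root_.abs_of_nonneg (Real.cosh_pos (x := t)).le] at h1
      nlinarith [abs_nonneg (Real.sinh t), norm_nonneg z]
    have hstep : (1 + z') * (1 - z) = E * ((1 + z) * (1 - z')) := by
      apply mul_left_cancel₀ hdenom
      linear_combination ((1 - z) + E * (1 + z)) * hmw - (1 + z) * (1 - z) * hexp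
    have hkey : (1 + z') / (1 - z') = E * ((1 + z) / (1 - z)) := by
      rw [div_eq_iff (hne1 _ hw')]
      field_simp [show (1:ℂ) - z ≠ 0 from hne1 _ hw]
      linear_combination hstep
    show Complex.log ((1 + z') / (1 - z')) = Complex.log ((1 + z) / (1 - z)) + 2 * (t:ℂ)
    rw [hkey, hE, Complex.log_ofReal_mul (Real.exp_pos _) (hrne w hw), Real.log_exp]
    push_cast
    ring

/-- The core case of the theorem, where `g` maps into the unit disk. -/
lemma core (g : ℂ → ℂ) (T P : Matrix (Fin 2) (Fin 2) ℂ) (ε : ℂ) (t : ℝ)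
    (hg : ∀ w : ℂ, w.re < 0 → DifferentiableAt ℂ g w)
    (hlt : ∀ w : ℂ, w.re < 0 → ‖g w‖ < 1)
    (hT : SU11 T) (hP : SU11 P) (hε : ε = 1 ∨ ε = -1) (ht : 0 < t)
    (hconj : P⁻¹ * T * P = ε • Λh t)
    (hmono : ∀ w : ℂ, w.re < 0 →
      (T 1 0 * g w + T 1 1) * g (w + 2 * Real.pi * Complex.I) = T 0 0 * g w + T 0 1) :
    False := by
  have hεne : ε ≠ 0 := by rcases hε with h | h <;> rw [h] <;> norm_num
  have hPdet : IsUnit P.det := by rw [hP.1]; exact isUnit_one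
  have hPP : P * P⁻¹ = 1 := Matrix.mul_nonsing_inv P hPdet
  set Q : Matrix (Fin 2) (Fin 2) ℂ := P⁻¹ with hQdef
  have hQ : SU11 Q := hP.inv
  have hQT : Q * T = (ε • Λh t) * Q := by
    have h1 := congrArg (fun M => M * Q) hconj
    calc Q * T = Q * T * (P * Q) := by rw [hPP, Matrix.mul_one]
    _ = (Q * T * P) * Q := by noncomm_ring
    _ = (ε • Λh t) * Q := h1
  set ch : ℂ := (Real.cosh t : ℂ) with hch
  set sh : ℂ := (Real.sinh t : ℂ) with hsh
  have entry : ∀ i j, (Q * T) i j = ((ε • Λh t) * Q) i j := fun i j => by rw [hQT]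
  have e00 : Q 0 0 * T 0 0 + Q 0 1 * T 1 0 = ε * (ch * Q 0 0 + sh * Q 1 0) := by
    have := entry 0 0
    simp [Matrix.mul_apply, Fin.sum_univ_two, Λh, Matrix.smul_apply, hch, hsh] at this
    rw [← Complex.ofReal_cosh, ← Complex.ofReal_sinh] at this
    linear_combination this
  have e01 : Q 0 0 * T 0 1 + Q 0 1 * T 1 1 = ε * (ch * Q 0 1 + sh * Q 1 1) := by
    have := entry 0 1
    simp [Matrix.mul_apply, Fin.sum_univ_two, Λh, Matrix.smul_apply, hch, hsh] at this
    rw [← Complex.ofReal_cosh, ← Complex.ofReal_sinh] at this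
    linear_combination this
  have e10 : Q 1 0 * T 0 0 + Q 1 1 * T 1 0 = ε * (sh * Q 0 0 + ch * Q 1 0) := by
    have := entry 1 0
    simp [Matrix.mul_apply, Fin.sum_univ_two, Λh, Matrix.smul_apply, hch, hsh] at this
    rw [← Complex.ofReal_cosh, ← Complex.ofReal_sinh] at this
    linear_combination this
  have e11 : Q 1 0 * T 0 1 + Q 1 1 * T 1 1 = ε * (sh * Q 0 1 + ch * Q 1 1) := by
    have := entry 1 1
    simp [Matrix.mul_apply, Fin.sum_univ_two, Λh, Matrix.smul_apply, hch, hsh] at this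
    rw [← Complex.ofReal_cosh, ← Complex.ofReal_sinh] at this
    linear_combination this
  set h : ℂ → ℂ := fun w => (Q 0 0 * g w + Q 0 1) / (Q 1 0 * g w + Q 1 1) with hhdef
  apply no_disk_map h t ht
  · intro w hw
    have hden : Q 1 0 * g w + Q 1 1 ≠ 0 := hQ.denom_ne (hlt w hw)
    exact DifferentiableAt.div (((hg w hw).const_mul (Q 0 0)).add_const (Q 0 1))
      (((hg w hw).const_mul (Q 1 0)).add_const (Q 1 1)) hden
  · intro w hw
    exact hQ.mobius_lt (hlt w hw)
  · intro w hw
    have hw' : (w + 2 * Real.pi * Complex.I).re < 0 := by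
      simpa [Complex.add_re, Complex.mul_re] using hw
    set z := g w with hz
    set z' := g (w + 2 * Real.pi * Complex.I) with hz'
    have hm := hmono w hw
    have hL : T 1 0 * z + T 1 1 ≠ 0 := hT.denom_ne (hlt w hw)
    have hden : Q 1 0 * z + Q 1 1 ≠ 0 := hQ.denom_ne (hlt w hw)
    have hden' : Q 1 0 * z' + Q 1 1 ≠ 0 := hQ.denom_ne (hlt _ hw')
    have key1 : (T 1 0 * z + T 1 1) * (Q 0 0 * z' + Q 0 1)
        = ε * (ch * (Q 0 0 * z + Q 0 1) + sh * (Q 1 0 * z + Q 1 1)) := by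
      linear_combination Q 0 0 * hm + z * e00 + e01
    have key2 : (T 1 0 * z + T 1 1) * (Q 1 0 * z' + Q 1 1)
        = ε * (sh * (Q 0 0 * z + Q 0 1) + ch * (Q 1 0 * z + Q 1 1)) := by
      linear_combination Q 1 0 * hm + z * e10 + e11
    set num : ℂ := Q 0 0 * z + Q 0 1 with hnum
    set den : ℂ := Q 1 0 * z + Q 1 1 with hdendef
    set num' : ℂ := Q 0 0 * z' + Q 0 1 with hnum'
    set den' : ℂ := Q 1 0 * z' + Q 1 1 with hden'def
    have hmain : (sh * num + ch * den) * num' = (ch * num + sh * den) * den' := by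
      apply mul_left_cancel₀ hL
      linear_combination (sh * num + ch * den) * key1 - (ch * num + sh * den) * key2
    show (↑(Real.sinh t) * h w + ↑(Real.cosh t)) * h (w + 2 * Real.pi * Complex.I)
        = ↑(Real.cosh t) * h w + ↑(Real.sinh t)
    rw [← hch, ← hsh]
    simp only [hhdef, ← hz, ← hz', ← hnum, ← hdendef, ← hnum', ← hden'def]
    have A : sh * (num/den) + ch = (sh*num + ch*den)/den := by field_simp [hden]
    have B : ch * (num/den) + sh = (ch*num + sh*den)/den := by field_simp [hden]
    rw [A, B, div_mul_div_comm, div_eq_div_iff (mul_ne_zero hden hden') hden]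
    linear_combination den * hmain

/-- the matrix `J = [[0,1],[1,0]]`. -/
def Jm : Matrix (Fin 2) (Fin 2) ℂ := !![0, 1; 1, 0]

lemma Jm_mul_Jm : Jm * Jm = 1 := by
  ext i j
  fin_cases i <;> fin_cases j <;>
    simp [Jm, Matrix.mul_apply, Fin.sum_univ_two, Matrix.one_apply]

lemma Jm_conjTranspose : Jmᴴ = Jm := by
  ext i j
  fin_cases i <;> fin_cases j <;> simp [Jm, Matrix.conjTranspose_apply]

lemma Jm_e3_Jm : Jm * e3 * Jm = -e3 := by
  ext i j
  fin_cases i <;> fin_cases j <;>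
    simp [Jm, e3, Matrix.mul_apply, Fin.sum_univ_two, Matrix.neg_apply]

lemma Jm_det : Jm.det = -1 := by
  simp [Jm, Matrix.det_fin_two_of]

lemma Jm_Λh (t : ℝ) : Jm * Λh t * Jm = Λh t := by
  ext i j
  fin_cases i <;> fin_cases j <;>
    simp [Jm, Λh, Matrix.mul_apply, Fin.sum_univ_two]

lemma SU11.J_conj {S : Matrix (Fin 2) (Fin 2) ℂ} (hS : SU11 S) : SU11 (Jm * S * Jm) := by
  constructor
  · rw [Matrix.det_mul, Matrix.det_mul, Jm_det, hS.1]
    ring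
  · have h1 : (Jm * S * Jm) * e3 * (Jm * S * Jm)ᴴ
        = Jm * (S * (Jm * e3 * Jm) * Sᴴ) * Jm := by
      simp only [Matrix.conjTranspose_mul, Jm_conjTranspose]
      noncomm_ring
    rw [h1, Jm_e3_Jm]
    have h2 : S * -e3 * Sᴴ = -(S * e3 * Sᴴ) := by noncomm_ring
    rw [h2, hS.2]
    calc Jm * -e3 * Jm = -(Jm * e3 * Jm) := by noncomm_ring
    _ = e3 := by rw [Jm_e3_Jm]; simp

end Aux

/-- The monodromy of a conformal hyperbolic metric on the punctured disk is
never hyperbolic: if `g` is a developing map on the left half-plane (a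
holomorphic function with nonvanishing derivative and `|g| ≠ 1`) whose
monodromy under `w ↦ w + 2πi` is given by `T ∈ SU(1,1)`, then `T` is not
conjugate in `SU(1,1)` to `±Λ_h(t)` with `t > 0`. -/
theorem monodromy_not_hyperbolic
    (g : ℂ → ℂ) (T : Matrix (Fin 2) (Fin 2) ℂ)
    (hg : ∀ w : ℂ, w.re < 0 → DifferentiableAt ℂ g w)
    (hg' : ∀ w : ℂ, w.re < 0 → deriv g w ≠ 0)
    (hg1 : ∀ w : ℂ, w.re < 0 → ‖g w‖ ≠ 1)
    (hT : SU11 T)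
    (hmono : ∀ w : ℂ, w.re < 0 →
      (T 1 0 * g w + T 1 1) * g (w + 2 * Real.pi * Complex.I)
        = T 0 0 * g w + T 0 1) :
    ¬ ∃ (P : Matrix (Fin 2) (Fin 2) ℂ) (ε : ℂ) (t : ℝ),
        SU11 P ∧ (ε = 1 ∨ ε = -1) ∧ 0 < t ∧ P⁻¹ * T * P = ε • Λh t := by
  rintro ⟨P, ε, t, hP, hε, ht, hconj⟩
  -- the image of `g` avoids the unit circle, hence by connectedness it is entirely
  -- inside or entirely outside the unit disk
  have hdich : ∀ w₀ w₁ : ℂ, w₀.re < 0 → w₁.re < 0 → ‖g w₀‖ < 1 → ‖g w₁‖ < 1 := by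
    intro w₀ w₁ hw₀ hw₁ h0
    by_contra hcon
    have h1 : 1 < ‖g w₁‖ := lt_of_le_of_ne (not_lt.1 hcon) (Ne.symm (hg1 w₁ hw₁))
    set γ : ℝ → ℂ := fun s => ((1 - s : ℝ) : ℂ) * w₀ + ((s : ℝ) : ℂ) * w₁ with hγ
    have hseg : ∀ s ∈ Set.Icc (0:ℝ) 1, (γ s).re < 0 := by
      intro s hs
      have : (γ s).re = (1 - s) * w₀.re + s * w₁.re := by
        simp [hγ, Complex.add_re, Complex.mul_re, Complex.ofReal_re, Complex.ofReal_im]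
      rw [this]
      rcases lt_or_ge s 1 with hs1 | hs1
      · nlinarith [mul_pos (by linarith : (0:ℝ) < 1 - s) (by linarith : (0:ℝ) < -w₀.re),
          mul_nonneg hs.1 (by linarith : (0:ℝ) ≤ -w₁.re)]
      · have hseq : s = 1 := le_antisymm hs.2 hs1
        rw [hseq]; simpa using hw₁
    have hγc : ContinuousOn γ (Set.Icc 0 1) := by
      apply ContinuousOn.add <;> apply ContinuousOn.mul <;> fun_prop
    have hφc : ContinuousOn (fun s => ‖g (γ s)‖) (Set.Icc 0 1) := by
      apply ContinuousOn.norm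
      intro s hs
      exact ((hg _ (hseg s hs)).continuousAt).comp_continuousWithinAt (hγc s hs)
    have hγ0 : γ 0 = w₀ := by simp [hγ]
    have hγ1 : γ 1 = w₁ := by simp [hγ]
    have hmem : (1:ℝ) ∈ Set.Icc ‖g (γ 0)‖ ‖g (γ 1)‖ := by
      rw [hγ0, hγ1]
      exact ⟨h0.le, h1.le⟩
    obtain ⟨s, hs, hφs⟩ := intermediate_value_Icc (by norm_num : (0:ℝ) ≤ 1) hφc hmem
    exact hg1 (γ s) (hseg s hs) hφs
  have hm1 : ((-1 : ℂ)).re < 0 := by norm_num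
  rcases lt_or_gt_of_ne (hg1 (-1) hm1) with hlt1 | hgt1
  · -- g maps into the unit disk
    have hall : ∀ w : ℂ, w.re < 0 → ‖g w‖ < 1 := fun w hw => hdich (-1) w hm1 hw hlt1
    exact core g T P ε t hg hall hT hP hε ht hconj hmono
  · -- g maps outside the closed unit disk; replace g by 1/g and conjugate by J
    have hall : ∀ w : ℂ, w.re < 0 → 1 < ‖g w‖ := by
      intro w hw
      rcases lt_or_gt_of_ne (hg1 w hw) with h | h
      · exact absurd (hdich w (-1) hw hm1 h) (by simpa [not_lt] using hgt1.le)
      · exact h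
    have hne : ∀ w : ℂ, w.re < 0 → g w ≠ 0 := by
      intro w hw h0
      have := hall w hw
      rw [h0] at this
      simp only [norm_zero] at this
      linarith
    set g' : ℂ → ℂ := fun w => (g w)⁻¹ with hg'def
    have hg'd : ∀ w : ℂ, w.re < 0 → DifferentiableAt ℂ g' w := fun w hw =>
      (hg w hw).inv (hne w hw)
    have hg'lt : ∀ w : ℂ, w.re < 0 → ‖g' w‖ < 1 := by
      intro w hw
      rw [hg'def]
      simp only [norm_inv]
      have := hall w hw
      rw [inv_lt_one_iff₀]
      right; exact this
    set T' := Jm * T * Jm with hT'def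
    set P' := Jm * P * Jm with hP'def
    have hT' : SU11 T' := hT.J_conj
    have hP' : SU11 P' := hP.J_conj
    have hPdet : IsUnit P.det := by rw [hP.1]; exact isUnit_one
    have hPP : P * P⁻¹ = 1 := Matrix.mul_nonsing_inv P hPdet
    have hP'inv : P'⁻¹ = Jm * P⁻¹ * Jm := by
      apply Matrix.inv_eq_right_inv
      calc (Jm * P * Jm) * (Jm * P⁻¹ * Jm) = Jm * (P * (Jm * Jm) * P⁻¹) * Jm := by noncomm_ring
      _ = Jm * (P * P⁻¹) * Jm := by rw [Jm_mul_Jm, Matrix.mul_one]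
      _ = Jm * Jm := by rw [hPP, Matrix.mul_one]
      _ = 1 := Jm_mul_Jm
    have hconj' : P'⁻¹ * T' * P' = ε • Λh t := by
      rw [hP'inv, hT'def, hP'def]
      calc (Jm * P⁻¹ * Jm) * (Jm * T * Jm) * (Jm * P * Jm)
          = Jm * (P⁻¹ * (Jm * Jm) * T * (Jm * Jm) * P) * Jm := by noncomm_ring
      _ = Jm * (P⁻¹ * T * P) * Jm := by rw [Jm_mul_Jm]; noncomm_ring
      _ = Jm * (ε • Λh t) * Jm := by rw [hconj]
      _ = ε • (Jm * Λh t * Jm) := by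
          rw [Matrix.mul_smul, Matrix.smul_mul]
      _ = ε • Λh t := by rw [Jm_Λh]
    -- transferred monodromy
    have hT'e : T' 0 0 = T 1 1 ∧ T' 0 1 = T 1 0 ∧ T' 1 0 = T 0 1 ∧ T' 1 1 = T 0 0 := by
      refine ⟨?_, ?_, ?_, ?_⟩ <;>
      · simp only [hT'def, Matrix.mul_apply, Fin.sum_univ_two, Jm]
        norm_num
    have hmono' : ∀ w : ℂ, w.re < 0 →
        (T' 1 0 * g' w + T' 1 1) * g' (w + 2 * Real.pi * Complex.I)
          = T' 0 0 * g' w + T' 0 1 := by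
      intro w hw
      have hw' : (w + 2 * Real.pi * Complex.I).re < 0 := by
        simpa [Complex.add_re, Complex.mul_re] using hw
      have hm := hmono w hw
      have hne1 : g w ≠ 0 := hne w hw
      have hne2 : g (w + 2 * Real.pi * Complex.I) ≠ 0 := hne _ hw'
      rw [hT'e.1, hT'e.2.1, hT'e.2.2.1, hT'e.2.2.2, hg'def]
      simp only
      field_simp
      linear_combination (-1) * hm
    exact core g' T' P' ε t hg'd hg'lt hT' hP' hε ht hconj' hmono'
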